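/- Let G be a graph with vertex partition V_1, ..., V_m in which each part V_i has size exactly n ≥ 2eD, each part is an independent set, and |V_i|·d̄_G(V_i) + |V_j|·d̄_G(V_j) ≤ 2nD for all i ≠ j. Choosing v_i ∈ V_i uniformly and independently, the probability that {v_1,...,v_m} contains both endpoints of some edge is strictly less than 1; hence an independent transversal exists. -/

import Mathlib

open Finset
section LLLAux
open Classical

variable {V : Type*} [Fintype V] [DecidableEq V]

lemma deg_sum_count (G : SimpleGraph V) [DecidableRel G.Adj] (W : Finset V) :
    ∑ w ∈ W, G.degree w = ∑ e ∈ G.edgeFinset, (W.filter (fun w => w ∈ e)).card := by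
  have h : ∀ w, G.degree w = (G.edgeFinset.filter (fun e => w ∈ e)).card := fun w => by
    rw [← SimpleGraph.card_incidenceFinset_eq_degree, SimpleGraph.incidenceFinset_eq_filter]
  simp_rw [h, Finset.card_filter]
  rw [Finset.sum_comm]

lemma numeric (t s : ℕ) (n : ℝ) (ht : 2 ≤ t) (hs : s + 2 ≤ t)
    (hn : Real.exp 1 * t ≤ n * n) :
    1 ≤ (1/(t:ℝ)) * (1 - 1/t)^s * (n * n) := by
  have hT : (2:ℝ) ≤ (t:ℝ) := by exact_mod_cast ht
  have hT0 : (0:ℝ) < t := by linarith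
  have hE : (0:ℝ) < Real.exp 1 := Real.exp_pos 1
  have h1 : (0:ℝ) ≤ 1 - 1/t := by
    have : 1/(t:ℝ) ≤ 1/2 := by
      apply one_div_le_one_div_of_le <;> linarith
    linarith
  have hmono : (1 - 1/(t:ℝ))^(t-2) ≤ (1 - 1/t)^s := by
    apply pow_le_pow_of_le_one h1 (by linarith [div_pos (by norm_num : (0:ℝ)<1) hT0])
    omega
  -- key: exp 1 * (1-1/t)^(t-2) ≥ 1
  have hkey : 1 ≤ Real.exp 1 * (1 - 1/(t:ℝ))^(t-2) := by
    have ht1 : (1:ℝ) ≤ (t:ℝ) - 1 := by linarith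
    have ht10 : (0:ℝ) < (t:ℝ) - 1 := by linarith
    have hb : (t:ℝ)/((t:ℝ)-1) ≤ Real.exp (1/((t:ℝ)-1)) := by
      have := Real.add_one_le_exp (1/((t:ℝ)-1))
      have : 1 + 1/((t:ℝ)-1) ≤ Real.exp (1/((t:ℝ)-1)) := by linarith
      calc (t:ℝ)/((t:ℝ)-1) = 1 + 1/((t:ℝ)-1) := by field_simp; ring
        _ ≤ _ := this
    have hpow : ((t:ℝ)/((t:ℝ)-1))^(t-2) ≤ Real.exp (1/((t:ℝ)-1)) ^ (t-2) :=
      pow_le_pow_left₀ (by positivity) hb _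
    have hexp : Real.exp (1/((t:ℝ)-1)) ^ (t-2) = Real.exp ((t-2:ℕ)/((t:ℝ)-1)) := by
      rw [← Real.exp_nat_mul]; ring_nf
    have hle : Real.exp (((t-2:ℕ):ℝ)/((t:ℝ)-1)) ≤ Real.exp 1 := by
      apply Real.exp_le_exp.mpr
      rw [div_le_one ht10]
      have : ((t-2:ℕ):ℝ) = (t:ℝ) - 2 := by
        have : (2:ℕ) ≤ t := ht
        push_cast [Nat.cast_sub this]; ring
      rw [this]; linarith
    have hinv : (1 - 1/(t:ℝ)) = (((t:ℝ)-1)/t) := by field_simp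
    have hgt : (0:ℝ) < (((t:ℝ)-1)/t)^(t-2) := by positivity
    have hprod : ((t:ℝ)/((t:ℝ)-1))^(t-2) * (((t:ℝ)-1)/t)^(t-2) = 1 := by
      rw [← mul_pow]; rw [show (t:ℝ)/((t:ℝ)-1) * (((t:ℝ)-1)/t) = 1 by field_simp]; simp
    rw [hinv]
    nlinarith [hpow, hle, hexp, hgt, Real.exp_pos (((t-2:ℕ):ℝ)/((t:ℝ)-1))]
  have h2 : (1/Real.exp 1) ≤ (1 - 1/(t:ℝ))^s := by
    rw [div_le_iff₀ hE] at *
    nlinarith [hmono, hkey]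
  have : Real.exp 1 * (t:ℝ) ≤ n * n := hn
  have hs0 : (0:ℝ) ≤ (1 - 1/t)^s := pow_nonneg h1 _
  have h3 : (t:ℝ) ≤ (1 - 1/(t:ℝ))^s * (n*n) := by
    calc (t:ℝ) = (1/Real.exp 1) * (Real.exp 1 * t) := by field_simp
      _ ≤ (1 - 1/(t:ℝ))^s * (n*n) := by
          apply mul_le_mul h2 hn (by positivity) hs0
  calc (1:ℝ) = (1/t) * t := by field_simp
    _ ≤ (1/(t:ℝ)) * ((1 - 1/t)^s * (n*n)) := by
        apply mul_le_mul_of_nonneg_left h3 (by positivity)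
    _ = (1/(t:ℝ)) * (1 - 1/t)^s * (n * n) := by ring


lemma pinned_count {m : ℕ} (P : Fin m → Finset V) (n : ℕ)
    (hsize : ∀ i, (P i).card = n)
    (i j : Fin m) (hij : i ≠ j) (u v : V) (hu : u ∈ P i) (hv : v ∈ P j)
    (Q : (Fin m → V) → Prop)
    (hQ : ∀ f a b, a ∈ P i → b ∈ P j → Q f → Q (Function.update (Function.update f i a) j b)) :
    ((univ.filter (fun f : Fin m → V => (∀ k, f k ∈ P k) ∧ Q f)).card) =
      n * n * ((univ.filter (fun f : Fin m → V =>
        ((∀ k, f k ∈ P k) ∧ Q f) ∧ f i = u ∧ f j = v)).card) := by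
  classical
  set s := univ.filter (fun f : Fin m → V => (∀ k, f k ∈ P k) ∧ Q f) with hs
  have hmap : ∀ f ∈ s, (f i, f j) ∈ P i ×ˢ P j := by
    intro f hf
    simp only [hs, mem_filter] at hf
    exact mem_product.mpr ⟨hf.2.1 i, hf.2.1 j⟩
  rw [Finset.card_eq_sum_card_fiberwise hmap]
  have hfib : ∀ p ∈ P i ×ˢ P j,
      (s.filter (fun f => (f i, f j) = p)).card =
      (s.filter (fun f => (f i, f j) = (u, v))).card := by
    rintro ⟨a, b⟩ hp
    obtain ⟨ha, hb⟩ := mem_product.mp hp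
    apply Finset.card_bij' (fun f _ => Function.update (Function.update f i u) j v)
      (fun f _ => Function.update (Function.update f i a) j b)
    · intro f hf
      simp only [mem_filter, hs, mem_univ, true_and, Prod.mk.injEq] at hf
      obtain ⟨⟨hP, hQf⟩, hfi, hfj⟩ := hf
      funext k
      by_cases hkj : k = j
      · subst hkj; simp [Function.update_self, hfj]
      · by_cases hki : k = i
        · subst hki; simp [Function.update_of_ne hkj, Function.update_self, hfi]
        · simp [Function.update_of_ne hkj, Function.update_of_ne hki]
    · intro f hf
      simp only [mem_filter, hs, mem_univ, true_and, Prod.mk.injEq] at hf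
      obtain ⟨⟨hP, hQf⟩, hfi, hfj⟩ := hf
      funext k
      by_cases hkj : k = j
      · subst hkj; simp [Function.update_self, hfj]
      · by_cases hki : k = i
        · subst hki; simp [Function.update_of_ne hkj, Function.update_self, hfi]
        · simp [Function.update_of_ne hkj, Function.update_of_ne hki]
    · intro f hf
      simp only [mem_filter, hs, mem_univ, true_and, Prod.mk.injEq] at hf ⊢
      obtain ⟨⟨hP, hQf⟩, hfi, hfj⟩ := hf
      refine ⟨⟨?_, hQ f u v hu hv hQf⟩, ?_, ?_⟩
      · intro k
        by_cases hkj : k = j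
        · subst hkj; simp [Function.update_self, hv]
        · by_cases hki : k = i
          · subst hki; simp [Function.update_of_ne hkj, Function.update_self, hu]
          · simp [Function.update_of_ne hkj, Function.update_of_ne hki, hP k]
      · simp [Function.update_of_ne hij, Function.update_self]
      · simp [Function.update_self]
    · intro f hf
      simp only [mem_filter, hs, mem_univ, true_and, Prod.mk.injEq] at hf ⊢
      obtain ⟨⟨hP, hQf⟩, hfi, hfj⟩ := hf
      refine ⟨⟨?_, hQ f a b ha hb hQf⟩, ?_, ?_⟩
      · intro k
        by_cases hkj : k = j
        · subst hkj; simp [Function.update_self, hb]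
        · by_cases hki : k = i
          · subst hki; simp [Function.update_of_ne hkj, Function.update_self, ha]
          · simp [Function.update_of_ne hkj, Function.update_of_ne hki, hP k]
      · simp [Function.update_of_ne hij, Function.update_self]
      · simp [Function.update_self]
  rw [Finset.sum_congr rfl hfib, Finset.sum_const, Finset.card_product, hsize i, hsize j]
  have hset : s.filter (fun f => (f i, f j) = (u, v)) =
      univ.filter (fun f : Fin m → V => ((∀ k, f k ∈ P k) ∧ Q f) ∧ f i = u ∧ f j = v) := by
    rw [hs, filter_filter]
    apply filter_congr
    intro f _
    simp [Prod.ext_iff]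
  rw [hset, smul_eq_mul]

variable {m n : ℕ} {G : SimpleGraph V} [DecidableRel G.Adj] {P : Fin m → Finset V}
  {pt : V → Fin m} {D : ℝ} {t : ℕ}

set_option maxHeartbeats 2000000 in
lemma key (hpt : ∀ v, v ∈ P (pt v)) (huniq : ∀ v i, v ∈ P i → pt v = i)
    (hn0 : 0 < n) (hD : 0 ≤ D)
    (hsize : ∀ i, (P i).card = n)
    (hn : 2 * Real.exp 1 * D ≤ n)
    (hindep : ∀ i, ∀ v ∈ P i, ∀ w ∈ P i, ¬ G.Adj v w)
    (hpairs : ∀ i j, i ≠ j →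
      (∑ v ∈ P i, (G.degree v : ℝ)) + (∑ v ∈ P j, (G.degree v : ℝ)) ≤ 2 * n * D)
    (ht : t = ⌊2 * (n:ℝ) * D⌋₊) :
    ∀ k (S : Finset (Sym2 V)), S.card ≤ k → S ⊆ G.edgeFinset →
      ∀ e ∈ G.edgeFinset, e ∉ S →
      ((univ.filter (fun f : Fin m → V => (∀ i, f i ∈ P i) ∧
          (∀ e' ∈ S, ¬ ∀ w ∈ e', f (pt w) = w) ∧ (∀ w ∈ e, f (pt w) = w))).card : ℝ)
        ≤ (1/(t:ℝ)) * ((univ.filter (fun f : Fin m → V => (∀ i, f i ∈ P i) ∧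
          (∀ e' ∈ S, ¬ ∀ w ∈ e', f (pt w) = w))).card : ℝ) := by
  intro k
  induction k using Nat.strong_induction_on with
  | _ k IH =>
  intro S hSk hSE e heE heS
  revert heE heS
  induction e using Sym2.ind with
  | _ u v =>
  intro heE heS
  have huv : G.Adj u v := by rwa [SimpleGraph.mem_edgeFinset, SimpleGraph.mem_edgeSet] at heE
  have hij : pt u ≠ pt v := by
    intro h
    exact hindep (pt u) u (hpt u) v (h ▸ hpt v) huv
  set S₂ := S.filter (fun e' => ∃ w ∈ e', pt w = pt u ∨ pt w = pt v) with hS₂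
  set S₁ := S.filter (fun e' => ¬ ∃ w ∈ e', pt w = pt u ∨ pt w = pt v) with hS₁
  -- counting S₂
  have hS2count : (S₂.card : ℝ) + 2 ≤ 2 * n * D := by
    set M := G.edgeFinset.filter (fun e' => ∃ w ∈ e', pt w = pt u ∨ pt w = pt v) with hM
    have heM : s(u,v) ∈ M := by
      rw [hM, mem_filter]
      exact ⟨heE, ⟨u, by simp, Or.inl rfl⟩⟩
    have hMpos : 1 ≤ M.card := Finset.card_pos.mpr ⟨_, heM⟩
    have hsub : S₂ ⊆ M.erase s(u,v) := by
      intro e' he'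
      rw [Finset.mem_erase]
      refine ⟨fun h => heS (h ▸ (mem_filter.mp he').1), ?_⟩
      rw [hM, mem_filter]
      exact ⟨hSE (mem_filter.mp he').1, (mem_filter.mp he').2⟩
    have h1 : S₂.card + 1 ≤ M.card := by
      have := Finset.card_le_card hsub
      rw [Finset.card_erase_of_mem heM] at this
      omega
    set W := P (pt u) ∪ P (pt v) with hW
    have hdisj : Disjoint (P (pt u)) (P (pt v)) := by
      rw [Finset.disjoint_left]
      intro w hw1 hw2
      exact hij ((huniq w _ hw1).symm.trans (huniq w _ hw2))
    have hsum : ∑ w ∈ W, G.degree w = ∑ e' ∈ G.edgeFinset, (W.filter (fun w => w ∈ e')).card :=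
      deg_sum_count G W
    have hWcount : ∀ e' ∈ M.erase s(u,v), 1 ≤ (W.filter (fun w => w ∈ e')).card := by
      intro e' he'
      have he'M := Finset.erase_subset _ _ he'
      obtain ⟨w, hw, hww⟩ := (mem_filter.mp he'M).2
      apply Finset.card_pos.mpr
      refine ⟨w, mem_filter.mpr ⟨?_, hw⟩⟩
      rw [hW, Finset.mem_union]
      rcases hww with h | h
      · exact Or.inl (h ▸ hpt w)
      · exact Or.inr (h ▸ hpt w)
    have hce : (W.filter (fun w => w ∈ (s(u,v):Sym2 V))).card = 2 := by
      have hset : W.filter (fun w => w ∈ (s(u,v):Sym2 V)) = {u, v} := by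
        ext w
        simp only [mem_filter, Sym2.mem_iff, Finset.mem_insert, Finset.mem_singleton]
        constructor
        · rintro ⟨_, h⟩; exact h
        · intro h
          refine ⟨?_, h⟩
          rw [hW, Finset.mem_union]
          rcases h with h | h
          · exact Or.inl (by rw [h]; exact hpt u)
          · exact Or.inr (by rw [h]; exact hpt v)
      rw [hset, Finset.card_insert_of_notMem (by simp [huv.ne]), Finset.card_singleton]
    have h2 : M.card + 1 ≤ ∑ w ∈ W, G.degree w := by
      rw [hsum]
      have step1 : (M.erase s(u,v)).card ≤ ∑ e' ∈ M.erase s(u,v), (W.filter (fun w => w ∈ e')).card := by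
        calc (M.erase s(u,v)).card = ∑ _e' ∈ M.erase s(u,v), 1 := by
              rw [Finset.sum_const, smul_eq_mul, mul_one]
          _ ≤ _ := Finset.sum_le_sum hWcount
      calc M.card + 1 = (M.erase s(u,v)).card + 2 := by
            rw [Finset.card_erase_of_mem heM]; omega
        _ ≤ (∑ e' ∈ M.erase s(u,v), (W.filter (fun w => w ∈ e')).card) + 2 := by omega
        _ = ∑ e' ∈ insert s(u,v) (M.erase s(u,v)), (W.filter (fun w => w ∈ e')).card := by
            rw [Finset.sum_insert (Finset.notMem_erase _ _), hce, add_comm]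
        _ = ∑ e' ∈ M, (W.filter (fun w => w ∈ e')).card := by
            rw [Finset.insert_erase heM]
        _ ≤ ∑ e' ∈ G.edgeFinset, (W.filter (fun w => w ∈ e')).card :=
            Finset.sum_le_sum_of_subset (filter_subset _ _)
    have hp := hpairs (pt u) (pt v) hij
    have hcast : ((∑ w ∈ W, G.degree w : ℕ) : ℝ)
        = ∑ v' ∈ P (pt u), (G.degree v' : ℝ) + ∑ v' ∈ P (pt v), (G.degree v' : ℝ) := by
      rw [hW, Finset.sum_union hdisj]
      push_cast
      ring
    have hc1 : (S₂.card:ℝ) + 1 ≤ (M.card : ℝ) := by exact_mod_cast h1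
    have hc2 : (M.card:ℝ) + 1 ≤ ((∑ w ∈ W, G.degree w : ℕ):ℝ) := by exact_mod_cast h2
    rw [hcast] at hc2
    linarith
  have ht2 : 2 ≤ t := by
    rw [ht]
    apply Nat.le_floor
    push_cast
    nlinarith [Nat.cast_nonneg (α := ℝ) S₂.card]
  have hsle : S₂.card + 2 ≤ t := by
    rw [ht]
    apply Nat.le_floor
    push_cast
    linarith
  set x : ℝ := 1/(t:ℝ) with hx
  have htR : (2:ℝ) ≤ (t:ℝ) := by exact_mod_cast ht2
  have hx0 : 0 ≤ x := by positivity
  have h1x : 0 ≤ 1 - x := by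
    have : x ≤ 1/2 := by
      rw [hx]; apply one_div_le_one_div_of_le <;> linarith
    linarith
  -- inner induction: adding elements of S₂ to S₁
  have claimC : ∀ T, T ⊆ S₂ →
      (1-x)^T.card * ((univ.filter (fun f : Fin m → V => (∀ i, f i ∈ P i) ∧
          (∀ e' ∈ S₁, ¬ ∀ w ∈ e', f (pt w) = w))).card : ℝ)
      ≤ ((univ.filter (fun f : Fin m → V => (∀ i, f i ∈ P i) ∧
          (∀ e' ∈ S₁ ∪ T, ¬ ∀ w ∈ e', f (pt w) = w))).card : ℝ) := by
    intro T
    induction T using Finset.induction_on with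
    | empty => simp
    | @insert a T' ha IHT =>
      intro hsub
      have hT'sub : T' ⊆ S₂ := (Finset.subset_insert a T').trans hsub
      have haS2 : a ∈ S₂ := hsub (mem_insert_self a T')
      have haS : a ∈ S := (mem_filter.mp haS2).1
      have haS1 : a ∉ S₁ := by
        intro h
        exact (mem_filter.mp h).2 ((mem_filter.mp haS2).2)
      have hS'sub : S₁ ∪ T' ⊆ S :=
        Finset.union_subset (filter_subset _ _) (hT'sub.trans (filter_subset _ _))
      have haS' : a ∉ S₁ ∪ T' := by simp [haS1, ha]
      have hlt : (S₁ ∪ T').card < k :=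
        lt_of_lt_of_le (Finset.card_lt_card ⟨hS'sub, fun hsub2 => haS' (hsub2 haS)⟩) hSk
      have hB := IH _ hlt (S₁ ∪ T') le_rfl (hS'sub.trans hSE) a (hSE haS) haS'
      have hunion : S₁ ∪ insert a T' = insert a (S₁ ∪ T') := Finset.union_insert a S₁ T'
      have hsplit := Finset.card_filter_add_card_filter_not
        (s := univ.filter (fun f : Fin m → V => (∀ i, f i ∈ P i) ∧
          (∀ e' ∈ S₁ ∪ T', ¬ ∀ w ∈ e', f (pt w) = w)))
        (p := fun f => ∀ w ∈ a, f (pt w) = w)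
      have e1 : (univ.filter (fun f : Fin m → V => (∀ i, f i ∈ P i) ∧
            (∀ e' ∈ S₁ ∪ T', ¬ ∀ w ∈ e', f (pt w) = w))).filter (fun f => ∀ w ∈ a, f (pt w) = w)
          = univ.filter (fun f : Fin m → V => (∀ i, f i ∈ P i) ∧
            (∀ e' ∈ S₁ ∪ T', ¬ ∀ w ∈ e', f (pt w) = w) ∧ (∀ w ∈ a, f (pt w) = w)) := by
        rw [filter_filter]
        apply filter_congr
        intro f _
        simp [and_assoc]
      have e2 : (univ.filter (fun f : Fin m → V => (∀ i, f i ∈ P i) ∧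
            (∀ e' ∈ S₁ ∪ T', ¬ ∀ w ∈ e', f (pt w) = w))).filter (fun f => ¬ ∀ w ∈ a, f (pt w) = w)
          = univ.filter (fun f : Fin m → V => (∀ i, f i ∈ P i) ∧
            (∀ e' ∈ S₁ ∪ insert a T', ¬ ∀ w ∈ e', f (pt w) = w)) := by
        rw [filter_filter, hunion]
        apply filter_congr
        intro f _
        simp only [Finset.forall_mem_insert]
        tauto
      rw [e1, e2] at hsplit
      have hIT := IHT hT'sub
      have hsplitR : ((univ.filter (fun f : Fin m → V => (∀ i, f i ∈ P i) ∧
            (∀ e' ∈ S₁ ∪ T', ¬ ∀ w ∈ e', f (pt w) = w) ∧ (∀ w ∈ a, f (pt w) = w))).card : ℝ)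
          + ((univ.filter (fun f : Fin m → V => (∀ i, f i ∈ P i) ∧
            (∀ e' ∈ S₁ ∪ insert a T', ¬ ∀ w ∈ e', f (pt w) = w))).card : ℝ)
          = ((univ.filter (fun f : Fin m → V => (∀ i, f i ∈ P i) ∧
            (∀ e' ∈ S₁ ∪ T', ¬ ∀ w ∈ e', f (pt w) = w))).card : ℝ) := by
        exact_mod_cast hsplit
      rw [Finset.card_insert_of_notMem ha, pow_succ]
      nlinarith [mul_le_mul_of_nonneg_left hIT h1x, hB, hsplitR,
        Nat.cast_nonneg (α := ℝ) ((univ.filter (fun f : Fin m → V => (∀ i, f i ∈ P i) ∧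
            (∀ e' ∈ S₁, ¬ ∀ w ∈ e', f (pt w) = w))).card)]
  -- decompose S = S₁ ∪ S₂
  have hdecomp : S₁ ∪ S₂ = S := by
    rw [hS₁, hS₂, union_comm, filter_union_filter_not_eq]
  have hstepC := claimC S₂ (Finset.Subset.refl _)
  rw [hdecomp] at hstepC
  -- pinned count
  have hBadiff : ∀ f : Fin m → V, (∀ w ∈ (s(u,v) : Sym2 V), f (pt w) = w) ↔
      (f (pt u) = u ∧ f (pt v) = v) := by
    intro f
    constructor
    · intro h; exact ⟨h u (by simp), h v (by simp)⟩
    · rintro ⟨h1, h2⟩ w hw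
      rcases Sym2.mem_iff.mp hw with rfl | rfl
      · exact h1
      · exact h2
  have hpin := pinned_count P n hsize (pt u) (pt v) hij u v (hpt u) (hpt v)
    (fun f => ∀ e' ∈ S₁, ¬ ∀ w ∈ e', f (pt w) = w) ?hQ
  case hQ =>
    intro f a b ha hb hQf e' he' hbad
    apply hQf e' he'
    intro w hw
    have hw1 : pt w ≠ pt u ∧ pt w ≠ pt v := by
      have := (mem_filter.mp he').2
      push_neg at this
      exact this w hw
    have := hbad w hw
    rwa [Function.update_of_ne hw1.2, Function.update_of_ne hw1.1] at this
  -- step A : LHS ≤ pinned card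
  have hstepA : ((univ.filter (fun f : Fin m → V => (∀ i, f i ∈ P i) ∧
          (∀ e' ∈ S, ¬ ∀ w ∈ e', f (pt w) = w) ∧ (∀ w ∈ (s(u,v):Sym2 V), f (pt w) = w))).card : ℝ)
      ≤ ((univ.filter (fun f : Fin m → V =>
          ((∀ i, f i ∈ P i) ∧ (∀ e' ∈ S₁, ¬ ∀ w ∈ e', f (pt w) = w)) ∧
          f (pt u) = u ∧ f (pt v) = v)).card : ℝ) := by
    have : ∀ f : Fin m → V, ((∀ i, f i ∈ P i) ∧
        (∀ e' ∈ S, ¬ ∀ w ∈ e', f (pt w) = w) ∧ (∀ w ∈ (s(u,v):Sym2 V), f (pt w) = w)) →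
        (((∀ i, f i ∈ P i) ∧ (∀ e' ∈ S₁, ¬ ∀ w ∈ e', f (pt w) = w)) ∧
          f (pt u) = u ∧ f (pt v) = v) := by
      intro f ⟨h1, h2, h3⟩
      exact ⟨⟨h1, fun e' he' => h2 e' (filter_subset _ _ he')⟩, (hBadiff f).mp h3⟩
    exact Nat.cast_le.mpr (Finset.card_le_card
      (Finset.monotone_filter_right univ (fun f _ => this f)))
  have hA1R : ((univ.filter (fun f : Fin m → V => (∀ i, f i ∈ P i) ∧
        (∀ e' ∈ S₁, ¬ ∀ w ∈ e', f (pt w) = w))).card : ℝ)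
      = (n:ℝ) * n * ((univ.filter (fun f : Fin m → V =>
        ((∀ i, f i ∈ P i) ∧ (∀ e' ∈ S₁, ¬ ∀ w ∈ e', f (pt w) = w)) ∧
        f (pt u) = u ∧ f (pt v) = v)).card : ℝ) := by
    have h := hpin
    norm_cast
    convert h using 5 <;> first | rfl | exact Subsingleton.elim _ _
  have hexpt : Real.exp 1 * t ≤ (n:ℝ) * n := by
    have hfl : (t:ℝ) ≤ 2*(n:ℝ)*D := by
      rw [ht]
      exact Nat.floor_le (by positivity)
    nlinarith [Real.exp_pos 1, Nat.cast_nonneg (α := ℝ) n]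
  have hnum := numeric t S₂.card n ht2 hsle hexpt
  calc ((univ.filter (fun f : Fin m → V => (∀ i, f i ∈ P i) ∧
          (∀ e' ∈ S, ¬ ∀ w ∈ e', f (pt w) = w) ∧ (∀ w ∈ (s(u,v):Sym2 V), f (pt w) = w))).card : ℝ)
      ≤ ((univ.filter (fun f : Fin m → V =>
          ((∀ i, f i ∈ P i) ∧ (∀ e' ∈ S₁, ¬ ∀ w ∈ e', f (pt w) = w)) ∧
          f (pt u) = u ∧ f (pt v) = v)).card : ℝ) := hstepA
    _ = 1 * _ := (one_mul _).symm
    _ ≤ (x*(1-x)^(S₂.card)*((n:ℝ)*n)) * ((univ.filter (fun f : Fin m → V =>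
          ((∀ i, f i ∈ P i) ∧ (∀ e' ∈ S₁, ¬ ∀ w ∈ e', f (pt w) = w)) ∧
          f (pt u) = u ∧ f (pt v) = v)).card : ℝ) :=
        mul_le_mul_of_nonneg_right hnum (Nat.cast_nonneg _)
    _ = x * ((1-x)^(S₂.card) * ((n:ℝ)*n*((univ.filter (fun f : Fin m → V =>
          ((∀ i, f i ∈ P i) ∧ (∀ e' ∈ S₁, ¬ ∀ w ∈ e', f (pt w) = w)) ∧
          f (pt u) = u ∧ f (pt v) = v)).card : ℝ))) := by ring
    _ = x * ((1-x)^(S₂.card) * ((univ.filter (fun f : Fin m → V => (∀ i, f i ∈ P i) ∧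
          (∀ e' ∈ S₁, ¬ ∀ w ∈ e', f (pt w) = w))).card : ℝ)) := by rw [hA1R]
    _ ≤ x * ((univ.filter (fun f : Fin m → V => (∀ i, f i ∈ P i) ∧
          (∀ e' ∈ S, ¬ ∀ w ∈ e', f (pt w) = w))).card : ℝ) :=
        mul_le_mul_of_nonneg_left hstepC hx0

end LLLAux

open Classical in
/-- Lovász-Local-Lemma step: if all parts are independent sets of size exactly
`n ≥ 2eD` and `|V_i|·d̄(V_i) + |V_j|·d̄(V_j) ≤ 2nD` for all `i ≠ j`, then choosing one
vertex uniformly and independently from each part, the probability that the chosen set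
contains an edge is less than `1`; hence an independent transversal exists. -/
theorem stmt17 {V : Type*} [Fintype V] [DecidableEq V]
    (G : SimpleGraph V) [DecidableRel G.Adj]
    (m n : ℕ) (P : Fin m → Finset V) (D : ℝ)
    (hpart : ∀ v : V, ∃! i, v ∈ P i)
    (hn0 : 0 < n) (hD : 0 ≤ D)
    (hsize : ∀ i, (P i).card = n)
    (hn : 2 * Real.exp 1 * D ≤ n)
    (hindep : ∀ i, ∀ v ∈ P i, ∀ w ∈ P i, ¬ G.Adj v w)
    (hpairs : ∀ i j, i ≠ j →
      (∑ v ∈ P i, (G.degree v : ℝ)) + (∑ v ∈ P j, (G.degree v : ℝ)) ≤ 2 * n * D) :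
    (((Finset.univ.filter (fun f : Fin m → V => ∀ i, f i ∈ P i)).filter
        (fun f => ∃ i j, G.Adj (f i) (f j))).card : ℝ)
      < ((Finset.univ.filter (fun f : Fin m → V => ∀ i, f i ∈ P i)).card : ℝ) ∧
    ∃ f : Fin m → V, (∀ i, f i ∈ P i) ∧ ∀ i j, ¬ G.Adj (f i) (f j) := by
  classical
  set pt : V → Fin m := fun v => (hpart v).choose with hptdef
  have hpt : ∀ v, v ∈ P (pt v) := fun v => (hpart v).choose_spec.1
  have huniq : ∀ v i, v ∈ P i → pt v = i := fun v i h => ((hpart v).choose_spec.2 i h).symm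
  set t : ℕ := ⌊2 * (n:ℝ) * D⌋₊ with htdef
  set x : ℝ := 1/(t:ℝ) with hxdef
  have hkey := key (G := G) hpt huniq hn0 hD hsize hn hindep hpairs htdef
  have hex : ∀ i, ∃ y, y ∈ P i := fun i => Finset.card_pos.mp (by rw [hsize i]; exact hn0)
  choose g hg using hex
  have hΩ0pos : 0 < (univ.filter (fun f : Fin m → V => ∀ i, f i ∈ P i)).card :=
    Finset.card_pos.mpr ⟨g, mem_filter.mpr ⟨mem_univ _, hg⟩⟩
  have hgoodAll : ∀ f' : Fin m → V, (∀ i, f' i ∈ P i) →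
      (∀ e' ∈ G.edgeFinset, ¬ ∀ w ∈ e', f' (pt w) = w) →
      ∀ i j, ¬ G.Adj (f' i) (f' j) := by
    intro f' hbase havoid i j hadj
    have he : s(f' i, f' j) ∈ G.edgeFinset := by
      rw [SimpleGraph.mem_edgeFinset, SimpleGraph.mem_edgeSet]
      exact hadj
    apply havoid _ he
    intro w hw
    rcases Sym2.mem_iff.mp hw with h | h
    · rw [h, huniq (f' i) i (hbase i)]
    · rw [h, huniq (f' j) j (hbase j)]
  by_cases hE : G.edgeFinset = ∅
  · have hbadempty : (Finset.univ.filter (fun f : Fin m → V => ∀ i, f i ∈ P i)).filter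
        (fun f => ∃ i j, G.Adj (f i) (f j)) = ∅ := by
      rw [Finset.eq_empty_iff_forall_notMem]
      intro f hf
      obtain ⟨i, j, hadj⟩ := (mem_filter.mp hf).2
      have : s(f i, f j) ∈ G.edgeFinset := by
        rw [SimpleGraph.mem_edgeFinset, SimpleGraph.mem_edgeSet]
        exact hadj
      rw [hE] at this
      exact absurd this (Finset.notMem_empty _)
    constructor
    · rw [hbadempty]
      exact_mod_cast hΩ0pos
    · refine ⟨g, hg, hgoodAll g hg ?_⟩
      intro e' he'
      rw [hE] at he'
      exact absurd he' (Finset.notMem_empty _)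
  · -- there is an edge, so t ≥ 2
    obtain ⟨e₀, he₀⟩ := Finset.nonempty_of_ne_empty hE
    have h2nD : (2:ℝ) ≤ 2*(n:ℝ)*D := by
      revert he₀
      induction e₀ using Sym2.ind with
      | _ u₀ v₀ =>
      intro he₀
      have huv₀ : G.Adj u₀ v₀ := by
        rwa [SimpleGraph.mem_edgeFinset, SimpleGraph.mem_edgeSet] at he₀
      have hij₀ : pt u₀ ≠ pt v₀ := by
        intro h
        exact hindep (pt u₀) u₀ (hpt u₀) v₀ (h ▸ hpt v₀) huv₀
      have hp := hpairs _ _ hij₀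
      have hdu : (1:ℝ) ≤ (G.degree u₀ : ℝ) := by
        have : 0 < G.degree u₀ := by
          rw [G.degree_pos_iff_exists_adj]
          exact ⟨v₀, huv₀⟩
        exact_mod_cast this
      have hdv : (1:ℝ) ≤ (G.degree v₀ : ℝ) := by
        have : 0 < G.degree v₀ := by
          rw [G.degree_pos_iff_exists_adj]
          exact ⟨u₀, huv₀.symm⟩
        exact_mod_cast this
      have hs1 : (1:ℝ) ≤ ∑ w ∈ P (pt u₀), (G.degree w : ℝ) :=
        le_trans hdu (Finset.single_le_sum (f := fun w => (G.degree w : ℝ))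
          (fun w _ => by positivity) (hpt u₀))
      have hs2 : (1:ℝ) ≤ ∑ w ∈ P (pt v₀), (G.degree w : ℝ) :=
        le_trans hdv (Finset.single_le_sum (f := fun w => (G.degree w : ℝ))
          (fun w _ => by positivity) (hpt v₀))
      linarith
    have ht2 : 2 ≤ t := by
      rw [htdef]
      apply Nat.le_floor
      push_cast
      linarith
    have htR : (2:ℝ) ≤ (t:ℝ) := by exact_mod_cast ht2
    have hx1 : 0 < 1 - x := by
      have : x ≤ 1/2 := by
        rw [hxdef]
        apply one_div_le_one_div_of_le <;> linarith
      linarith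
    -- survival induction
    have claim : ∀ T, T ⊆ G.edgeFinset →
        (1-x)^T.card * ((univ.filter (fun f : Fin m → V => ∀ i, f i ∈ P i)).card:ℝ)
        ≤ ((univ.filter (fun f : Fin m → V => (∀ i, f i ∈ P i) ∧
            ∀ e' ∈ T, ¬ ∀ w ∈ e', f (pt w) = w)).card : ℝ) := by
      intro T
      induction T using Finset.induction_on with
      | empty =>
        intro _
        have heq : (univ.filter (fun f : Fin m → V => (∀ i, f i ∈ P i) ∧
            ∀ e' ∈ (∅ : Finset (Sym2 V)), ¬ ∀ w ∈ e', f (pt w) = w))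
            = univ.filter (fun f : Fin m → V => ∀ i, f i ∈ P i) := by
          apply filter_congr
          intro f _
          simp
        rw [heq]
        simp
      | @insert a T' ha IHT =>
        intro hsub
        have hT' : T' ⊆ G.edgeFinset := (Finset.subset_insert a T').trans hsub
        have haE : a ∈ G.edgeFinset := hsub (mem_insert_self a T')
        have hB := hkey T'.card T' le_rfl hT' a haE ha
        have hsplit := Finset.card_filter_add_card_filter_not
          (s := univ.filter (fun f : Fin m → V => (∀ i, f i ∈ P i) ∧
            (∀ e' ∈ T', ¬ ∀ w ∈ e', f (pt w) = w)))
          (p := fun f => ∀ w ∈ a, f (pt w) = w)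
        have e1 : (univ.filter (fun f : Fin m → V => (∀ i, f i ∈ P i) ∧
              (∀ e' ∈ T', ¬ ∀ w ∈ e', f (pt w) = w))).filter (fun f => ∀ w ∈ a, f (pt w) = w)
            = univ.filter (fun f : Fin m → V => (∀ i, f i ∈ P i) ∧
              (∀ e' ∈ T', ¬ ∀ w ∈ e', f (pt w) = w) ∧ (∀ w ∈ a, f (pt w) = w)) := by
          rw [filter_filter]
          apply filter_congr
          intro f _
          simp [and_assoc]
        have e2 : (univ.filter (fun f : Fin m → V => (∀ i, f i ∈ P i) ∧
              (∀ e' ∈ T', ¬ ∀ w ∈ e', f (pt w) = w))).filter (fun f => ¬ ∀ w ∈ a, f (pt w) = w)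
            = univ.filter (fun f : Fin m → V => (∀ i, f i ∈ P i) ∧
              (∀ e' ∈ insert a T', ¬ ∀ w ∈ e', f (pt w) = w)) := by
          rw [filter_filter]
          apply filter_congr
          intro f _
          simp only [Finset.forall_mem_insert]
          tauto
        rw [e1, e2] at hsplit
        have hIT := IHT hT'
        have hsplitR : ((univ.filter (fun f : Fin m → V => (∀ i, f i ∈ P i) ∧
              (∀ e' ∈ T', ¬ ∀ w ∈ e', f (pt w) = w) ∧ (∀ w ∈ a, f (pt w) = w))).card : ℝ)
            + ((univ.filter (fun f : Fin m → V => (∀ i, f i ∈ P i) ∧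
              (∀ e' ∈ insert a T', ¬ ∀ w ∈ e', f (pt w) = w))).card : ℝ)
            = ((univ.filter (fun f : Fin m → V => (∀ i, f i ∈ P i) ∧
              (∀ e' ∈ T', ¬ ∀ w ∈ e', f (pt w) = w))).card : ℝ) := by
          exact_mod_cast hsplit
        rw [Finset.card_insert_of_notMem ha, pow_succ]
        nlinarith [mul_le_mul_of_nonneg_left hIT (le_of_lt hx1), hB, hsplitR,
          Nat.cast_nonneg (α := ℝ) ((univ.filter (fun f : Fin m → V => ∀ i, f i ∈ P i)).card)]
    have hsurv := claim G.edgeFinset (Finset.Subset.refl _)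
    have hSpos : (0:ℝ) < ((univ.filter (fun f : Fin m → V => (∀ i, f i ∈ P i) ∧
        ∀ e' ∈ G.edgeFinset, ¬ ∀ w ∈ e', f (pt w) = w)).card : ℝ) := by
      refine lt_of_lt_of_le ?_ hsurv
      apply mul_pos (pow_pos hx1 _)
      exact_mod_cast hΩ0pos
    have hSnat : 0 < (univ.filter (fun f : Fin m → V => (∀ i, f i ∈ P i) ∧
        ∀ e' ∈ G.edgeFinset, ¬ ∀ w ∈ e', f (pt w) = w)).card := by exact_mod_cast hSpos
    obtain ⟨f, hf⟩ := Finset.card_pos.mp hSnat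
    have hfbase := (mem_filter.mp hf).2.1
    have hfavoid := (mem_filter.mp hf).2.2
    have hfgood := hgoodAll f hfbase hfavoid
    refine ⟨?_, f, hfbase, hfgood⟩
    -- counting
    have hsub2 : (univ.filter (fun f : Fin m → V => (∀ i, f i ∈ P i) ∧
        ∀ e' ∈ G.edgeFinset, ¬ ∀ w ∈ e', f (pt w) = w)) ⊆
        (Finset.univ.filter (fun f : Fin m → V => ∀ i, f i ∈ P i)).filter
          (fun f => ¬ ∃ i j, G.Adj (f i) (f j)) := by
      intro f' hf'
      have h1 := (mem_filter.mp hf').2.1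
      have h2 := (mem_filter.mp hf').2.2
      refine mem_filter.mpr ⟨mem_filter.mpr ⟨mem_univ _, h1⟩, ?_⟩
      rintro ⟨i, j, hadj⟩
      exact hgoodAll f' h1 h2 i j hadj
    have hcount := Finset.card_filter_add_card_filter_not
      (s := Finset.univ.filter (fun f : Fin m → V => ∀ i, f i ∈ P i))
      (p := fun f => ∃ i j, G.Adj (f i) (f j))
    have hle := Finset.card_le_card hsub2
    have hstep := Nat.add_le_add_left hle
      (((Finset.univ.filter (fun f : Fin m → V => ∀ i, f i ∈ P i)).filter
        (fun f => ∃ i j, G.Adj (f i) (f j))).card)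
    rw [hcount] at hstep
    have : ((Finset.univ.filter (fun f : Fin m → V => ∀ i, f i ∈ P i)).filter
        (fun f => ∃ i j, G.Adj (f i) (f j))).card
        < (Finset.univ.filter (fun f : Fin m → V => ∀ i, f i ∈ P i)).card :=
      lt_of_lt_of_le (Nat.lt_add_of_pos_right hSnat) hstep
    exact_mod_cast this
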